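/- arXiv:1201.2499 — 2 statements merged into one kernel-verified Lean document; each statement's English description precedes it below -/
import Mathlib

section
/- Let T be a triangulated category with small Hom sets and let (X, Y) and (Y, Z) be stable t-structures in T with Z * X = T. Then the Verdier quotient T/(X ∩ Z) has small Hom sets: for all objects t, t' of T, the class of morphisms Hom_{T/(X ∩ Z)}(Q(t), Q(t')) is a small set, where Q : T → T/(X ∩ Z) is the quotient functor. -/
namespace Paper

open CategoryTheory Limits Triangulated Pretriangulated ZeroObject

universe w v u

variable {C : Type u} [Category.{v} C] [HasZeroObject C] [Preadditive C] [HasShift C ℤ]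
  [∀ n : ℤ, (shiftFunctor C n).Additive] [Pretriangulated C]

/-- The subcategory of extensions `X * Y`: objects `e` admitting a distinguished triangle
`x ⟶ e ⟶ y ⟶ x⟦1⟧` with `x ∈ X` and `y ∈ Y`. -/
def star (X Y : Set C) : Set C :=
  {e | ∃ (x y : C) (_ : x ∈ X) (_ : y ∈ Y) (f : x ⟶ e) (g : e ⟶ y) (h : y ⟶ x⟦(1 : ℤ)⟧),
    Triangle.mk f g h ∈ distTriang C}

/-- A (strictly full) triangulated subcategory: a class of objects containing `0`, closed
under isomorphisms, suspension, desuspension and extensions. -/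
structure IsTriangulatedSubcat (S : Set C) : Prop where
  zero_mem : (0 : C) ∈ S
  mem_of_iso : ∀ {a b : C}, (a ≅ b) → a ∈ S → b ∈ S
  shift_mem : ∀ {a : C}, a ∈ S → a⟦(1 : ℤ)⟧ ∈ S
  unshift_mem : ∀ {a : C}, a ∈ S → a⟦(-1 : ℤ)⟧ ∈ S
  ext₂ : ∀ {a e b : C} (f : a ⟶ e) (g : e ⟶ b) (h : b ⟶ a⟦(1 : ℤ)⟧),
    (Triangle.mk f g h ∈ distTriang C) → a ∈ S → b ∈ S → e ∈ S

/-- A thick subcategory: a triangulated subcategory closed under direct summands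
(equivalently, retracts). -/
structure IsThickSubcat (S : Set C) extends IsTriangulatedSubcat S : Prop where
  mem_of_retract : ∀ {a s : C}, s ∈ S → (∃ (i : a ⟶ s) (p : s ⟶ a), i ≫ p = 𝟙 a) → a ∈ S

/-- `(U, V)` is a stable t-structure in the (triangulated sub)category whose class of
objects is `S`: both are triangulated subcategories contained in `S`, `Hom(U, V) = 0`
and `U * V = S`. -/
structure IsStableTStructureIn (S U V : Set C) : Prop where
  subsetU : U ⊆ S
  subsetV : V ⊆ S
  triU : IsTriangulatedSubcat U
  triV : IsTriangulatedSubcat V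
  hom_zero : ∀ {u v : C}, u ∈ U → v ∈ V → ∀ f : u ⟶ v, f = 0
  star_eq : star U V = S

lemma IsTriangulatedSubcat.shift_all {S : Set C} (hS : IsTriangulatedSubcat S) (a : C) (n : ℤ)
    (ha : a ∈ S) : a⟦n⟧ ∈ S := by
  induction n using Int.induction_on with
  | zero => exact hS.mem_of_iso ((shiftFunctorZero C ℤ).app a).symm ha
  | succ i hi =>
      exact hS.mem_of_iso ((shiftFunctorAdd' C (i : ℤ) 1 ((i : ℤ) + 1) rfl).app a).symm
        (hS.shift_mem hi)
  | pred i hi =>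
      exact hS.mem_of_iso
        ((shiftFunctorAdd' C (-(i : ℤ)) (-1) (-(i : ℤ) - 1) (by ring)).app a).symm
        (hS.unshift_mem hi)

/-- The Mathlib `Triangulated.Subcategory` associated to a class of objects satisfying
`IsTriangulatedSubcat`. -/
def IsTriangulatedSubcat.toSubcategory {S : Set C} (hS : IsTriangulatedSubcat S) :
    ObjectProperty C :=
  fun a => a ∈ S

instance IsTriangulatedSubcat.toSubcategory_isTriangulated {S : Set C}
    (hS : IsTriangulatedSubcat S) : hS.toSubcategory.IsTriangulated where
  exists_zero := ⟨0, isZero_zero C, hS.zero_mem⟩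
  isStableUnderShiftBy n := ⟨fun a ha => hS.shift_all a n ha⟩
  ext₂' T hT h₁ h₃ :=
    ObjectProperty.le_isoClosure _ _ (hS.ext₂ T.mor₁ T.mor₂ T.mor₃ hT h₁ h₃)

lemma IsTriangulatedSubcat.inter {X Y : Set C} (hX : IsTriangulatedSubcat X)
    (hY : IsTriangulatedSubcat Y) : IsTriangulatedSubcat (X ∩ Y) where
  zero_mem := ⟨hX.zero_mem, hY.zero_mem⟩
  mem_of_iso := fun e h => ⟨hX.mem_of_iso e h.1, hY.mem_of_iso e h.2⟩
  shift_mem := fun h => ⟨hX.shift_mem h.1, hY.shift_mem h.2⟩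
  unshift_mem := fun h => ⟨hX.unshift_mem h.1, hY.unshift_mem h.2⟩
  ext₂ := fun f g h hT ha hb => ⟨hX.ext₂ f g h hT ha.1 hb.1, hY.ext₂ f g h hT ha.2 hb.2⟩

/-- The Verdier quotient of `C` by the triangulated subcategory `S`. -/
abbrev VerdierQuotient {S : Set C} (hS : IsTriangulatedSubcat S) : Type _ :=
  hS.toSubcategory.trW.Localization

/-- The Verdier quotient functor. -/
noncomputable abbrev Vq {S : Set C} (hS : IsTriangulatedSubcat S) : C ⥤ VerdierQuotient hS :=
  hS.toSubcategory.trW.Q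

/-- The essential image of a class of objects under a functor (the closure under
isomorphisms of the image). -/
def QSet {D : Type*} [Category D] (L : C ⥤ D) (S : Set C) : Set D :=
  {d | ∃ s ∈ S, Nonempty (L.obj s ≅ d)}

/-- The right perpendicular class `X^⊥`. -/
def rightPerp (X : Set C) : Set C := {t | ∀ {x : C}, x ∈ X → ∀ f : x ⟶ t, f = 0}

/-- The left perpendicular class `^⊥X`. -/
def leftPerp (X : Set C) : Set C := {t | ∀ {x : C}, x ∈ X → ∀ f : t ⟶ x, f = 0}

/-! ### Auxiliary lemmas for the proof of `statement8` -/

section GenericSmall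

variable {D : Type*} [Category D] [HasZeroObject D] [Preadditive D] [HasShift D ℤ]
  [∀ n : ℤ, (shiftFunctor D n).Additive] [Pretriangulated D]

/-- If the `Hom`s from `m` into the two outer objects of a distinguished triangle are
`w`-small, then so is the `Hom` into the middle object. -/
lemma small_hom_obj₂ (T : Triangle D) (hT : T ∈ distTriang D) (m : D)
    (h₁ : Small.{w} (m ⟶ T.obj₁)) (h₃ : Small.{w} (m ⟶ T.obj₃)) :
    Small.{w} (m ⟶ T.obj₂) := by
  classical
  haveI := h₁; haveI := h₃
  set sec : (m ⟶ T.obj₃) → (m ⟶ T.obj₂) := fun χ =>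
    if h : ∃ β : m ⟶ T.obj₂, β ≫ T.mor₂ = χ then h.choose else 0 with hsecdef
  have hsec : ∀ (β : m ⟶ T.obj₂), sec (β ≫ T.mor₂) ≫ T.mor₂ = β ≫ T.mor₂ := by
    intro β
    have h : ∃ β' : m ⟶ T.obj₂, β' ≫ T.mor₂ = β ≫ T.mor₂ := ⟨β, rfl⟩
    simp only [hsecdef, dif_pos h]
    exact h.choose_spec
  apply small_of_surjective
    (f := fun p : (m ⟶ T.obj₁) × (m ⟶ T.obj₃) => p.1 ≫ T.mor₁ + sec p.2)
  intro β
  obtain ⟨ψ, hψ⟩ := Triangle.coyoneda_exact₂ T hT (β - sec (β ≫ T.mor₂))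
    (by rw [Preadditive.sub_comp, hsec, sub_self])
  refine ⟨⟨ψ, β ≫ T.mor₂⟩, ?_⟩
  dsimp only
  rw [← hψ]
  abel

/-- If the `Hom`s from the two outer objects of a distinguished triangle into `m` are
`w`-small, then so is the `Hom` from the middle object. -/
lemma small_hom_obj₂' (T : Triangle D) (hT : T ∈ distTriang D) (m : D)
    (h₁ : Small.{w} (T.obj₁ ⟶ m)) (h₃ : Small.{w} (T.obj₃ ⟶ m)) :
    Small.{w} (T.obj₂ ⟶ m) := by
  classical
  haveI := h₁; haveI := h₃
  set sec : (T.obj₁ ⟶ m) → (T.obj₂ ⟶ m) := fun ψ =>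
    if h : ∃ β : T.obj₂ ⟶ m, T.mor₁ ≫ β = ψ then h.choose else 0 with hsecdef
  have hsec : ∀ (β : T.obj₂ ⟶ m), T.mor₁ ≫ sec (T.mor₁ ≫ β) = T.mor₁ ≫ β := by
    intro β
    have h : ∃ β' : T.obj₂ ⟶ m, T.mor₁ ≫ β' = T.mor₁ ≫ β := ⟨β, rfl⟩
    simp only [hsecdef, dif_pos h]
    exact h.choose_spec
  apply small_of_surjective
    (f := fun p : (T.obj₁ ⟶ m) × (T.obj₃ ⟶ m) => sec p.1 + T.mor₂ ≫ p.2)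
  intro β
  obtain ⟨χ, hχ⟩ := Triangle.yoneda_exact₂ T hT (β - sec (T.mor₁ ≫ β))
    (by rw [Preadditive.comp_sub, hsec, sub_self])
  refine ⟨⟨T.mor₁ ≫ β, χ⟩, ?_⟩
  dsimp only
  rw [← hχ]
  abel

end GenericSmall

section Statement8Aux

open MorphismProperty

variable [IsTriangulated C]
variable {X Y Z : Set C}

/-- Distinguished triangles of `C` map to distinguished triangles of the Verdier quotient. -/
lemma Q_map_distinguished (hU : IsTriangulatedSubcat (X ∩ Z)) (T' : Triangle C)
    (hT' : T' ∈ distTriang C) :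
    (Vq hU).mapTriangle.obj T' ∈ distTriang (VerdierQuotient hU) :=
  ⟨T', Iso.refl _, hT'⟩

/-- Objects of `X ∩ Z` become zero in the quotient. -/
lemma isZero_Q_obj (hU : IsTriangulatedSubcat (X ∩ Z)) {u : C} (hu : u ∈ X ∩ Z) :
    IsZero ((Vq hU).obj u) := by
  have h : hU.toSubcategory.trW (contractibleTriangle u).mor₂ :=
    ObjectProperty.trW.mk' _ (contractible_distinguished u) hu
  have : IsIso ((Vq hU).map (contractibleTriangle u).mor₂) :=
    Localization.inverts _ hU.toSubcategory.trW _ h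
  have h0 : IsZero ((Vq hU).obj (0 : C)) := (Vq hU).map_isZero (isZero_zero C)
  exact h0.of_iso (@asIso _ _ _ _ ((Vq hU).map (contractibleTriangle u).mor₂) this)

/-- Morphisms factoring through `X ∩ Z` become zero in the quotient. -/
lemma Q_map_eq_zero (hU : IsTriangulatedSubcat (X ∩ Z)) {a b m : C} (hm : m ∈ X ∩ Z)
    (g : a ⟶ m) (h : m ⟶ b) : (Vq hU).map (g ≫ h) = 0 := by
  rw [Functor.map_comp, (isZero_Q_obj hU hm).eq_of_tgt ((Vq hU).map g) 0, zero_comp]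

/-- The source of a morphism of `W` whose target lies in `Z` lies in `Z` as well. -/
lemma mem_Z_of_W_src (hZtri : IsTriangulatedSubcat Z) {hU : IsTriangulatedSubcat (X ∩ Z)}
    {c z : C} {s : c ⟶ z} (hs : hU.toSubcategory.trW s) (hz : z ∈ Z) : c ∈ Z := by
  obtain ⟨u, g, h, hT, hu⟩ := hs
  have hu' : u ∈ X ∩ Z := hu
  have h' := inv_rot_of_distTriang _ hT
  exact hZtri.ext₂ _ _ _ h' (hZtri.shift_all u (-1) hu'.2) hz

/-- Key lemma: if `Z * X = C` then every morphism from an object of `Z` to an object of `X`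
factors through an object of `X ∩ Z`. -/
lemma exists_factor_inter (hZX : star Z X = Set.univ)
    (hXtri : IsTriangulatedSubcat X) (hZtri : IsTriangulatedSubcat Z)
    {z x : C} (hz : z ∈ Z) (hx : x ∈ X) (f : z ⟶ x) :
    ∃ (m : C) (_ : m ∈ X ∩ Z) (g : z ⟶ m) (h : m ⟶ x), g ≫ h = f := by
  obtain ⟨w, g', h', hT⟩ := distinguished_cocone_triangle₁ f
  obtain ⟨zw, xw, hzw, hxw, a, b, e, hT2⟩ := Set.eq_univ_iff_forall.mp hZX w
  obtain ⟨m, r, s, hT3⟩ := distinguished_cocone_triangle (a ≫ g')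
  have H := Triangulated.someOctahedron rfl hT2 hT hT3
  refine ⟨m, ⟨?_, ?_⟩, r, H.m₃, H.comm₃⟩
  · exact hXtri.ext₂ H.m₁ H.m₃ _ H.mem hxw hx
  · exact hZtri.ext₂ _ _ _ (rot_of_distTriang _ hT3) hz (hZtri.shift_mem hzw)

/-- Every morphism in the quotient with target in (the image of) `Y` is the image of a
morphism of `C`; uses `Hom(X, Y) = 0`. -/
lemma small_hom_to_Y (hU : IsTriangulatedSubcat (X ∩ Z))
    (hXY : ∀ {a b : C}, a ∈ X → b ∈ Y → ∀ f : a ⟶ b, f = 0)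
    (hYshift : ∀ {a : C}, a ∈ Y → a⟦(1 : ℤ)⟧ ∈ Y)
    (t y : C) (hy : y ∈ Y) : Small.{v} ((Vq hU).obj t ⟶ (Vq hU).obj y) := by
  refine small_of_surjective (f := fun (h : t ⟶ y) => (Vq hU).map h) ?_
  intro φ
  obtain ⟨ζ, hζ⟩ := Localization.exists_leftFraction (Vq hU) hU.toSubcategory.trW φ
  obtain ⟨u, g, h', hT, hu⟩ := ζ.hs
  have hu' : u ∈ X ∩ Z := hu
  have hzero : h' = 0 := hXY hu'.1 (hYshift hy) h'
  have h0 : (Triangle.mk ζ.s g h').invRotate.mor₁ ≫ 𝟙 y = 0 := by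
    have key : ∀ (e : (shiftFunctor C (-1)).obj ((shiftFunctor C 1).obj y) ⟶ y),
        (-(shiftFunctor C (-1)).map h' ≫ e) ≫ 𝟙 y = 0 := by
      intro e
      rw [hzero, Functor.map_zero, zero_comp, neg_zero, zero_comp]
    exact key _
  obtain ⟨(r : ζ.Y' ⟶ y), hr⟩ := Triangle.yoneda_exact₂ _ (inv_rot_of_distTriang _ hT) (𝟙 y) h0
  have hr' : ζ.s ≫ r = 𝟙 y := by
    exact hr.symm
  have hiso : IsIso ((Vq hU).map ζ.s) :=
    Localization.inverts (Vq hU) hU.toSubcategory.trW ζ.s ζ.hs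
  have h1 : (Vq hU).map ζ.s ≫ (Vq hU).map r = 𝟙 _ := by
    rw [← Functor.map_comp, hr', CategoryTheory.Functor.map_id]
  have h2 : inv ((Vq hU).map ζ.s) = (Vq hU).map r := IsIso.inv_eq_of_hom_inv_id h1
  refine ⟨ζ.f ≫ r, ?_⟩
  rw [hζ, show ζ.map (Vq hU) (Localization.inverts _ _) =
    (Vq hU).map ζ.f ≫ inv ((Vq hU).map ζ.s) from rfl, h2, ← Functor.map_comp]

/-- Every morphism in the quotient with source in (the image of) `Y` is the image of a
morphism of `C`; uses `Hom(Y, Z) = 0`. -/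
lemma small_hom_from_Y (hU : IsTriangulatedSubcat (X ∩ Z))
    (hYZ : ∀ {a b : C}, a ∈ Y → b ∈ Z → ∀ f : a ⟶ b, f = 0)
    (t y : C) (hy : y ∈ Y) : Small.{v} ((Vq hU).obj y ⟶ (Vq hU).obj t) := by
  refine small_of_surjective (f := fun (h : y ⟶ t) => (Vq hU).map h) ?_
  intro φ
  obtain ⟨ζ, hζ⟩ := Localization.exists_rightFraction (Vq hU) hU.toSubcategory.trW φ
  obtain ⟨u, g, h', hT, hu⟩ := ζ.hs
  have hu' : u ∈ X ∩ Z := hu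
  have hzero : g = 0 := hYZ hy hu'.2 g
  obtain ⟨(σ : y ⟶ ζ.X'), hσ⟩ := Triangle.coyoneda_exact₂ _ hT (𝟙 y)
    (by change 𝟙 y ≫ g = 0; rw [hzero, comp_zero])
  have hσ' : σ ≫ ζ.s = 𝟙 y := hσ.symm
  have hiso : IsIso ((Vq hU).map ζ.s) :=
    Localization.inverts (Vq hU) hU.toSubcategory.trW ζ.s ζ.hs
  have h1 : (Vq hU).map σ ≫ (Vq hU).map ζ.s = 𝟙 _ := by
    rw [← Functor.map_comp, hσ', CategoryTheory.Functor.map_id]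
  have h2 : inv ((Vq hU).map ζ.s) = (Vq hU).map σ := IsIso.inv_eq_of_inv_hom_id h1
  refine ⟨σ ≫ ζ.f, ?_⟩
  rw [hζ, show ζ.map (Vq hU) (Localization.inverts _ _) =
    inv ((Vq hU).map ζ.s) ≫ (Vq hU).map ζ.f from rfl, h2, ← Functor.map_comp]

/-- In the quotient there are no nonzero morphisms from (the image of) `Z`
to (the image of) `X`. -/
lemma hom_ZX_eq_zero (hU : IsTriangulatedSubcat (X ∩ Z))
    (hXtri : IsTriangulatedSubcat X) (hZtri : IsTriangulatedSubcat Z)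
    (hZX : star Z X = Set.univ) {z x : C} (hz : z ∈ Z) (hx : x ∈ X)
    (φ : (Vq hU).obj z ⟶ (Vq hU).obj x) : φ = 0 := by
  obtain ⟨ζ, hζ⟩ := Localization.exists_rightFraction (Vq hU) hU.toSubcategory.trW φ
  have hc : ζ.X' ∈ Z := mem_Z_of_W_src hZtri ζ.hs hz
  obtain ⟨m, hm, g, h, hgh⟩ := exists_factor_inter hZX hXtri hZtri hc hx ζ.f
  have hf0 : (Vq hU).map ζ.f = 0 := by rw [← hgh]; exact Q_map_eq_zero hU hm g h
  have hiso : IsIso ((Vq hU).map ζ.s) :=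
    Localization.inverts (Vq hU) hU.toSubcategory.trW ζ.s ζ.hs
  rw [hζ, show ζ.map (Vq hU) (Localization.inverts _ _) =
    inv ((Vq hU).map ζ.s) ≫ (Vq hU).map ζ.f from rfl, hf0, comp_zero]

lemma small_ZX (hU : IsTriangulatedSubcat (X ∩ Z))
    (hXtri : IsTriangulatedSubcat X) (hZtri : IsTriangulatedSubcat Z)
    (hZX : star Z X = Set.univ) {z x : C} (hz : z ∈ Z) (hx : x ∈ X) :
    Small.{v} ((Vq hU).obj z ⟶ (Vq hU).obj x) := by
  have : Subsingleton ((Vq hU).obj z ⟶ (Vq hU).obj x) :=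
    ⟨fun a b => by
      rw [hom_ZX_eq_zero hU hXtri hZtri hZX hz hx a,
        hom_ZX_eq_zero hU hXtri hZtri hZX hz hx b]⟩
  exact small_subsingleton _

section Chain

variable (hU : IsTriangulatedSubcat (X ∩ Z))
  (hXY : IsStableTStructureIn Set.univ X Y)
  (hYZ : IsStableTStructureIn Set.univ Y Z) (hZX : star Z X = Set.univ)

include hXY hYZ hZX

lemma small_XX {x x' : C} (hx : x ∈ X) (hx' : x' ∈ X) :
    Small.{v} ((Vq hU).obj x ⟶ (Vq hU).obj x') := by
  obtain ⟨y₁, z₁, hy₁, hz₁, a, b, e, hT⟩ := Set.eq_univ_iff_forall.mp hYZ.star_eq x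
  exact small_hom_obj₂' _ (Q_map_distinguished hU _ hT) ((Vq hU).obj x')
    (small_hom_from_Y hU (fun ha hb f => hYZ.hom_zero ha hb f) x' y₁ hy₁)
    (small_ZX hU hXY.triU hYZ.triV hZX hz₁ hx')

lemma small_XZ {x z' : C} (hx : x ∈ X) (hz' : z' ∈ Z) :
    Small.{v} ((Vq hU).obj x ⟶ (Vq hU).obj z') := by
  obtain ⟨x₂, y₂, hx₂, hy₂, a, b, e, hT⟩ := Set.eq_univ_iff_forall.mp hXY.star_eq z'
  exact small_hom_obj₂ _ (Q_map_distinguished hU _ hT) ((Vq hU).obj x)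
    (small_XX hU hXY hYZ hZX hx hx₂)
    (small_hom_to_Y hU (fun ha hb f => hXY.hom_zero ha hb f)
      (fun hb => hXY.triV.shift_mem hb) x y₂ hy₂)

lemma small_ZZ {z z' : C} (hz : z ∈ Z) (hz' : z' ∈ Z) :
    Small.{v} ((Vq hU).obj z ⟶ (Vq hU).obj z') := by
  obtain ⟨x₂, y₂, hx₂, hy₂, a, b, e, hT⟩ := Set.eq_univ_iff_forall.mp hXY.star_eq z
  exact small_hom_obj₂' _ (Q_map_distinguished hU _ hT) ((Vq hU).obj z')
    (small_XZ hU hXY hYZ hZX hx₂ hz')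
    (small_hom_from_Y hU (fun ha hb f => hYZ.hom_zero ha hb f) z' y₂ hy₂)

lemma small_TX {t x' : C} (hx' : x' ∈ X) :
    Small.{v} ((Vq hU).obj t ⟶ (Vq hU).obj x') := by
  obtain ⟨z₀, x₀, hz₀, hx₀, a, b, e, hT⟩ := Set.eq_univ_iff_forall.mp hZX t
  exact small_hom_obj₂' _ (Q_map_distinguished hU _ hT) ((Vq hU).obj x')
    (small_ZX hU hXY.triU hYZ.triV hZX hz₀ hx')
    (small_XX hU hXY hYZ hZX hx₀ hx')

lemma small_TZ {t z' : C} (hz' : z' ∈ Z) :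
    Small.{v} ((Vq hU).obj t ⟶ (Vq hU).obj z') := by
  obtain ⟨z₀, x₀, hz₀, hx₀, a, b, e, hT⟩ := Set.eq_univ_iff_forall.mp hZX t
  exact small_hom_obj₂' _ (Q_map_distinguished hU _ hT) ((Vq hU).obj z')
    (small_ZZ hU hXY hYZ hZX hz₀ hz')
    (small_XZ hU hXY hYZ hZX hx₀ hz')

lemma small_TT (t t' : C) :
    Small.{v} ((Vq hU).obj t ⟶ (Vq hU).obj t') := by
  obtain ⟨zs, xs, hzs, hxs, a, b, e, hT⟩ := Set.eq_univ_iff_forall.mp hZX t'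
  exact small_hom_obj₂ _ (Q_map_distinguished hU _ hT) ((Vq hU).obj t)
    (small_TZ hU hXY hYZ hZX hzs)
    (small_TX hU hXY hYZ hZX hxs)

end Chain

end Statement8Aux

variable [IsTriangulated C]

/-- Let `(X, Y)` and `(Y, Z)` be stable t-structures in `C` with `Z * X = C`.  Then the
Verdier quotient `C/(X ∩ Z)` has small `Hom` sets: for all `t, t'` in `C`, the class of
morphisms `Q(t) ⟶ Q(t')` is `v`-small, where `v` is the universe of the `Hom` sets
of `C`. -/
theorem statement8 {X Y Z : Set C} (hXY : IsStableTStructureIn Set.univ X Y)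
    (hYZ : IsStableTStructureIn Set.univ Y Z) (hZX : star Z X = Set.univ) :
    ∀ t t' : C,
      Small.{v} ((Vq (hXY.triU.inter hYZ.triV)).obj t ⟶ (Vq (hXY.triU.inter hYZ.triV)).obj t') := by
  intro t t'
  exact small_TT (hXY.triU.inter hYZ.triV) hXY hYZ hZX t t'

end Paper
end

section
/- Let T be a triangulated category, let X be a triangulated subcategory of T, and set F = X * X^⊥, G = (^⊥X) * X, and U = F ∩ G. Then U is a triangulated subcategory of T. -/
namespace Paper

open CategoryTheory Limits Triangulated Pretriangulated ZeroObject

universe w v u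

variable {C : Type u} [Category.{v} C] [HasZeroObject C] [Preadditive C] [HasShift C ℤ]
  [∀ n : ℤ, (shiftFunctor C n).Additive] [Pretriangulated C]

section StarLemmas

variable {A B : Set C}

lemma star_iso {e e' : C} (i : e ≅ e') (he : e ∈ star A B) : e' ∈ star A B := by
  obtain ⟨x, y, hx, hy, f, g, h, hT⟩ := he
  exact ⟨x, y, hx, hy, f ≫ i.hom, i.inv ≫ g, h,
    isomorphic_distinguished _ hT _
      (Triangle.isoMk _ _ (Iso.refl _) i.symm (Iso.refl _) (by exact (Category.assoc _ _ _).trans ((congrArg _ i.hom_inv_id).trans ((Category.comp_id f).trans (Category.id_comp f).symm)))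
        (by exact Category.comp_id _)
        (by exact (congrArg _ (CategoryTheory.Functor.map_id _ _)).trans ((Category.comp_id h).trans (Category.id_comp h).symm)))⟩

lemma star_shift₁ (hA : IsTriangulatedSubcat A) (hB : IsTriangulatedSubcat B)
    {e : C} (he : e ∈ star A B) : e⟦(1 : ℤ)⟧ ∈ star A B := by
  obtain ⟨x, y, hx, hy, f, g, h, hT⟩ := he
  exact ⟨x⟦(1 : ℤ)⟧, y⟦(1 : ℤ)⟧, hA.shift_mem hx, hB.shift_mem hy, _, _, _,
    rot_of_distTriang _ (rot_of_distTriang _ (rot_of_distTriang _ hT))⟩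

lemma star_shift_neg₁ (hA : IsTriangulatedSubcat A) (hB : IsTriangulatedSubcat B)
    {e : C} (he : e ∈ star A B) : e⟦(-1 : ℤ)⟧ ∈ star A B := by
  obtain ⟨x, y, hx, hy, f, g, h, hT⟩ := he
  exact ⟨x⟦(-1 : ℤ)⟧, y⟦(-1 : ℤ)⟧, hA.unshift_mem hx, hB.unshift_mem hy, _, _, _,
    inv_rot_of_distTriang _ (inv_rot_of_distTriang _ (inv_rot_of_distTriang _ hT))⟩

/-- `B * A ⊆ A * B` when `Hom(A, B) = 0`: the triangle splits. -/
lemma star_swap (hB : IsTriangulatedSubcat B)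
    (hzero : ∀ {a b : C}, a ∈ A → b ∈ B → ∀ f : a ⟶ b, f = 0)
    {b m a : C} (hb : b ∈ B) (ha : a ∈ A) (f : b ⟶ m) (g : m ⟶ a) (h : a ⟶ b⟦(1 : ℤ)⟧)
    (hT : Triangle.mk f g h ∈ distTriang C) : m ∈ star A B := by
  have h0 : h = 0 := hzero ha (hB.shift_mem hb) h
  obtain ⟨e, -, -⟩ := exists_iso_binaryBiproduct_of_distTriang _ hT h0
  have hmem : (a ⊞ b : C) ∈ star A B :=
    ⟨a, b, ha, hb, biprod.inl, biprod.snd, 0, binaryBiproductTriangle_distinguished a b⟩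
  exact star_iso ((biprod.braiding a b) ≪≫ e.symm) hmem

variable [IsTriangulated C]

/-- `B * (A * B) ⊆ A * B`. -/
lemma star_ext_aux (hA : IsTriangulatedSubcat A) (hB : IsTriangulatedSubcat B)
    (hzero : ∀ {a b : C}, a ∈ A → b ∈ B → ∀ f : a ⟶ b, f = 0)
    {y n m : C} (hy : y ∈ B) (hm : m ∈ star A B)
    (f : y ⟶ n) (g : n ⟶ m) (h : m ⟶ y⟦(1 : ℤ)⟧)
    (hT : Triangle.mk f g h ∈ distTriang C) : n ∈ star A B := by
  obtain ⟨x₂, y₂, hx₂, hy₂, u, v, w, hTm⟩ := hm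
  obtain ⟨d, p, q, hd⟩ := distinguished_cocone_triangle (g ≫ v)
  have oct := someOctahedron (u₁₂ := g) (u₂₃ := v) (u₁₃ := g ≫ v) rfl
    (rot_of_distTriang _ hT) (rot_of_distTriang _ hTm) hd
  -- oct.mem : y⟦1⟧ ⟶ d ⟶ x₂⟦1⟧ ⟶ y⟦1⟧⟦1⟧ distinguished
  have hdmem : d ∈ star A B :=
    star_swap hB hzero (hB.shift_mem hy) (hA.shift_mem hx₂) _ _ _ oct.mem
  have hdneg : d⟦(-1 : ℤ)⟧ ∈ star A B := star_shift_neg₁ hA hB hdmem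
  obtain ⟨x₃, y₃, hx₃, hy₃, u', v', w', hTd⟩ := hdneg
  -- invRotate of hd : d⟦-1⟧ ⟶ n ⟶ y₂ ⟶ d⟦-1⟧⟦1⟧
  have hinv := inv_rot_of_distTriang _ hd
  obtain ⟨c, p', q', hc⟩ :=
    distinguished_cocone_triangle (u' ≫ (Triangle.mk (g ≫ v) p q).invRotate.mor₁)
  have oct₂ := someOctahedron (u₁₂ := u')
    (u₂₃ := (Triangle.mk (g ≫ v) p q).invRotate.mor₁)
    (u₁₃ := u' ≫ (Triangle.mk (g ≫ v) p q).invRotate.mor₁) rfl hTd hinv hc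
  -- oct₂.mem : y₃ ⟶ c ⟶ y₂ ⟶ y₃⟦1⟧ distinguished, so c ∈ B
  have hcB : c ∈ B := hB.ext₂ _ _ _ oct₂.mem hy₃ hy₂
  exact ⟨x₃, c, hx₃, hcB, _, _, _, hc⟩

/-- `A * (A * B) ⊆ A * B`. -/
lemma star_ext_aux₂ (hA : IsTriangulatedSubcat A) (hB : IsTriangulatedSubcat B)
    {x e c : C} (hx : x ∈ A) (hc : c ∈ star A B)
    (f : x ⟶ e) (g : e ⟶ c) (h : c ⟶ x⟦(1 : ℤ)⟧)
    (hT : Triangle.mk f g h ∈ distTriang C) : e ∈ star A B := by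
  obtain ⟨x', y', hx', hy', u, v, w, hTc⟩ := hc
  obtain ⟨d, p, q, hd⟩ := distinguished_cocone_triangle (g ≫ v)
  have oct := someOctahedron (u₁₂ := g) (u₂₃ := v) (u₁₃ := g ≫ v) rfl
    (rot_of_distTriang _ hT) (rot_of_distTriang _ hTc) hd
  -- oct.mem : x⟦1⟧ ⟶ d ⟶ x'⟦1⟧ ⟶ x⟦1⟧⟦1⟧ distinguished, so d ∈ A
  have hdA : d ∈ A := hA.ext₂ _ _ _ oct.mem (hA.shift_mem hx) (hA.shift_mem hx')
  -- invRotate of hd : d⟦-1⟧ ⟶ e ⟶ y' ⟶ d⟦-1⟧⟦1⟧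
  exact ⟨d⟦(-1 : ℤ)⟧, y', hA.unshift_mem hdA, hy', _, _, _, inv_rot_of_distTriang _ hd⟩

lemma star_triangulated (hA : IsTriangulatedSubcat A) (hB : IsTriangulatedSubcat B)
    (hzero : ∀ {a b : C}, a ∈ A → b ∈ B → ∀ f : a ⟶ b, f = 0) :
    IsTriangulatedSubcat (star A B) where
  zero_mem := ⟨0, 0, hA.zero_mem, hB.zero_mem, 𝟙 0, 0, 0, contractible_distinguished 0⟩
  mem_of_iso := fun i hi => star_iso i hi
  shift_mem := fun h => star_shift₁ hA hB h
  unshift_mem := fun h => star_shift_neg₁ hA hB h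
  ext₂ := by
    intro a e b f g h hT ha hb
    obtain ⟨x₁, y₁, hx₁, hy₁, u, v, w, hTa⟩ := ha
    obtain ⟨c, p, q, hc⟩ := distinguished_cocone_triangle (u ≫ f)
    have oct := someOctahedron (u₁₂ := u) (u₂₃ := f) (u₁₃ := u ≫ f) rfl hTa hT hc
    -- oct.mem : y₁ ⟶ c ⟶ b ⟶ y₁⟦1⟧ distinguished, so c ∈ A * B
    have hcmem : c ∈ star A B := star_ext_aux hA hB hzero hy₁ hb _ _ _ oct.mem
    exact star_ext_aux₂ hA hB hx₁ hcmem _ _ _ hc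

end StarLemmas

lemma rightPerp_triangulated {X : Set C} (hX : IsTriangulatedSubcat X) :
    IsTriangulatedSubcat (rightPerp X) where
  zero_mem := fun {x} _ f => (Limits.isZero_zero C).eq_of_tgt f 0
  mem_of_iso := fun {a b} i ha {x} hx f => by
    have : f ≫ i.inv = 0 := ha hx (f ≫ i.inv)
    calc f = (f ≫ i.inv) ≫ i.hom := by simp
    _ = 0 := by rw [this, zero_comp]
  shift_mem := fun {a} ha {x} hx f => by
    apply (shiftFunctor C (-1 : ℤ)).map_injective
    have h0 : f⟦(-1 : ℤ)⟧' ≫ (shiftEquiv C (1 : ℤ)).unitIso.inv.app a = 0 :=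
      ha (hX.unshift_mem hx) _
    rw [Functor.map_zero]
    exact (cancel_mono ((shiftEquiv C (1 : ℤ)).unitIso.inv.app a)).1 (h0.trans zero_comp.symm)
  unshift_mem := fun {a} ha {x} hx f => by
    apply (shiftFunctor C (1 : ℤ)).map_injective
    have h0 : f⟦(1 : ℤ)⟧' ≫ (shiftEquiv C (1 : ℤ)).counitIso.hom.app a = 0 :=
      ha (hX.shift_mem hx) _
    rw [Functor.map_zero]
    exact (cancel_mono ((shiftEquiv C (1 : ℤ)).counitIso.hom.app a)).1 (h0.trans zero_comp.symm)
  ext₂ := fun {a e b} f g h hT ha hb {x} hx k => by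
    have hk : k ≫ g = 0 := hb hx (k ≫ g)
    obtain ⟨k', hk'⟩ := Triangle.coyoneda_exact₂ _ hT k hk
    rw [hk', ha hx k']; exact zero_comp

lemma leftPerp_triangulated {X : Set C} (hX : IsTriangulatedSubcat X) :
    IsTriangulatedSubcat (leftPerp X) where
  zero_mem := fun {x} _ f => (Limits.isZero_zero C).eq_of_src f 0
  mem_of_iso := fun {a b} i ha {x} hx f => by
    have : i.hom ≫ f = 0 := ha hx (i.hom ≫ f)
    calc f = i.inv ≫ (i.hom ≫ f) := by simp
    _ = 0 := by rw [this, comp_zero]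
  shift_mem := fun {a} ha {x} hx f => by
    apply (shiftFunctor C (-1 : ℤ)).map_injective
    have h0 : (shiftEquiv C (1 : ℤ)).unitIso.hom.app a ≫ f⟦(-1 : ℤ)⟧' = 0 :=
      ha (hX.unshift_mem hx) _
    rw [Functor.map_zero]
    exact (cancel_epi ((shiftEquiv C (1 : ℤ)).unitIso.hom.app a)).1 (h0.trans comp_zero.symm)
  unshift_mem := fun {a} ha {x} hx f => by
    apply (shiftFunctor C (1 : ℤ)).map_injective
    have h0 : (shiftEquiv C (1 : ℤ)).counitIso.inv.app a ≫ f⟦(1 : ℤ)⟧' = 0 :=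
      ha (hX.shift_mem hx) _
    rw [Functor.map_zero]
    exact (cancel_epi ((shiftEquiv C (1 : ℤ)).counitIso.inv.app a)).1 (h0.trans comp_zero.symm)
  ext₂ := fun {a e b} f g h hT ha hb {x} hx k => by
    have hk : f ≫ k = 0 := ha hx (f ≫ k)
    obtain ⟨k', hk'⟩ := Triangle.yoneda_exact₂ _ hT k hk
    rw [hk', hb hx k']; exact comp_zero


variable [IsTriangulated C]

/-- Let `X` be a triangulated subcategory of `C` and set `F = X * X^⊥`, `G = (^⊥X) * X`
and `U = F ∩ G`.  Then `U` is a triangulated subcategory of `C`. -/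
theorem statement14 {X : Set C} (hX : IsTriangulatedSubcat X) :
    IsTriangulatedSubcat (star X (rightPerp X) ∩ star (leftPerp X) X) := by
  exact IsTriangulatedSubcat.inter
    (star_triangulated hX (rightPerp_triangulated hX) (fun ha hb f => hb ha f))
    (star_triangulated (leftPerp_triangulated hX) hX (fun ha hb f => ha hb f))

end Paper
end
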